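/- Let (X,T) be a topological dynamical system with metric d ≤ 1, μ ∈ M(X,T), and A = {a_i} a strictly increasing sequence with upper density D̄(A) > 0. If (X,T) is μ-A-mean-equicontinuous, then the family {(x,y) ↦ d(T^{a_n}x, T^{a_n}y) : n ∈ ℕ} is pre-compact in L¹(μ×μ). -/

import Mathlib

open MeasureTheory Filter Topology
open scoped ENNReal NNReal
set_option linter.unusedSectionVars false
set_option linter.unusedVariables false

section Aux

variable {X : Type*} [MetricSpace X] [CompactSpace X] [MeasurableSpace X]
    [BorelSpace X] (μ : Measure X) [IsProbabilityMeasure μ] (T : X ≃ₜ X)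

/-- The L¹ distance between the "distance at time s" and "distance at time t" observables. -/
noncomputable def gd (s t : ℕ) : ℝ :=
  ∫ p : X × X, |dist ((⇑T)^[s] p.1) ((⇑T)^[s] p.2) - dist ((⇑T)^[t] p.1) ((⇑T)^[t] p.2)|
    ∂(μ.prod μ)

variable {μ T}

lemma integrable_of_bound {Z : Type*} [MeasurableSpace Z] (ν : Measure Z)
    [IsFiniteMeasure ν] (f : Z → ℝ) (hf : AEStronglyMeasurable f ν) (C : ℝ)
    (h : ∀ z, |f z| ≤ C) : Integrable f ν :=
  Integrable.mono' (integrable_const C) hf (ae_of_all _ (by simpa [Real.norm_eq_abs] using h))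

lemma continuous_distIter (s : ℕ) :
    Continuous (fun p : X × X => dist ((⇑T)^[s] p.1) ((⇑T)^[s] p.2)) := by
  have h : Continuous ((⇑T)^[s]) := T.continuous.iterate s
  exact (h.comp continuous_fst).dist (h.comp continuous_snd)

lemma gd_nonneg (s t : ℕ) : 0 ≤ gd μ T s t :=
  integral_nonneg fun p => abs_nonneg _

lemma integrable_gd_integrand (hdle : ∀ x y : X, dist x y ≤ 1) (s t : ℕ) :
    Integrable (fun p : X × X =>
      |dist ((⇑T)^[s] p.1) ((⇑T)^[s] p.2) - dist ((⇑T)^[t] p.1) ((⇑T)^[t] p.2)|) (μ.prod μ) := by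
  refine integrable_of_bound _ _ ?_ 2 ?_
  · exact (((continuous_distIter s).sub (continuous_distIter t)).abs).aestronglyMeasurable
  · intro z
    rw [abs_abs]
    have h1 := dist_nonneg (x := (⇑T)^[s] z.1) (y := (⇑T)^[s] z.2)
    have h2 := dist_nonneg (x := (⇑T)^[t] z.1) (y := (⇑T)^[t] z.2)
    have h3 := hdle ((⇑T)^[s] z.1) ((⇑T)^[s] z.2)
    have h4 := hdle ((⇑T)^[t] z.1) ((⇑T)^[t] z.2)
    rw [abs_sub_le_iff]; constructor <;> linarith

lemma gd_self (s : ℕ) : gd μ T s s = 0 := by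
  unfold gd; simp

lemma gd_symm (s t : ℕ) : gd μ T s t = gd μ T t s := by
  unfold gd
  congr 1; funext p; rw [abs_sub_comm]

lemma gd_triangle (hdle : ∀ x y : X, dist x y ≤ 1) (s t u : ℕ) :
    gd μ T s u ≤ gd μ T s t + gd μ T t u := by
  unfold gd
  rw [← integral_add (integrable_gd_integrand hdle s t) (integrable_gd_integrand hdle t u)]
  refine integral_mono (integrable_gd_integrand hdle s u)
    ((integrable_gd_integrand hdle s t).add (integrable_gd_integrand hdle t u)) ?_
  intro p
  exact abs_sub_le _ _ _

lemma shift_integral (hT : MeasurePreserving T μ μ) (F : X × X → ℝ) :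
    ∫ p : X × X, F (T p.1, T p.2) ∂(μ.prod μ) = ∫ p, F p ∂(μ.prod μ) := by
  have hmp : MeasurePreserving (fun p : X × X => (T p.1, T p.2)) (μ.prod μ) (μ.prod μ) :=
    hT.prod hT
  have he : MeasurableEmbedding (fun p : X × X => (T p.1, T p.2)) := by
    have := (T.toMeasurableEquiv.prodCongr T.toMeasurableEquiv).measurableEmbedding
    convert this using 1
    rfl
  exact hmp.integral_comp he F

lemma gd_shift (hT : MeasurePreserving T μ μ) (s t u : ℕ) :
    gd μ T (s + u) (t + u) = gd μ T s t := by
  induction u with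
  | zero => rfl
  | succ u ih =>
    rw [← ih]
    have h := shift_integral hT (fun p : X × X =>
      |dist ((⇑T)^[s + u] p.1) ((⇑T)^[s + u] p.2) -
        dist ((⇑T)^[t + u] p.1) ((⇑T)^[t + u] p.2)|)
    unfold gd
    simp only [Nat.add_succ, Function.iterate_succ_apply]
    exact h

end Aux
section Analysis

variable {X : Type*} [MetricSpace X] [CompactSpace X] [MeasurableSpace X]
    [BorelSpace X] {μ : Measure X} [IsProbabilityMeasure μ] {T : X ≃ₜ X}

open Classical in
lemma analysis (hT : MeasurePreserving T μ μ)
    (hdle : ∀ x y : X, dist x y ≤ 1) (a : ℕ → ℕ)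
    (hmec : ∀ τ > (0 : ℝ), ∃ K : Set X, IsCompact K ∧
      μ K > ENNReal.ofReal (1 - τ) ∧ ∀ ε > (0 : ℝ), ∃ δ > (0 : ℝ),
      ∀ x ∈ K, ∀ y ∈ K, dist x y < δ →
        limsup (fun n : ℕ => (1 / (n : ℝ)) *
          ∑ i ∈ Finset.range n, dist ((⇑T)^[a i] x) ((⇑T)^[a i] y)) atTop < ε)
    (ε₁ ρ : ℝ) (hε₁ : 0 < ε₁) (hρ : 0 < ρ) :
    ∃ (P : ℕ) (cl : ℕ → Fin P) (good : ℕ → Prop),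
      (∀ n m, good n → good m → cl n = cl m → gd μ T (a n) (a m) ≤ ε₁) ∧
      (∀ᶠ N : ℕ in atTop,
        (((Finset.range N).filter fun n => ¬ good n).card : ℝ) ≤ ρ * N) := by
  -- parameters
  obtain ⟨τ, θ, γ, hτpos, hθpos, hγpos, hτhalf, hsumbound⟩ :
      ∃ τ θ γ : ℝ, 0 < τ ∧ 0 < θ ∧ 0 < γ ∧ τ ≤ 1 / 2 ∧
        4 * γ + (θ + θ) + (θ + θ) + (τ + τ) ≤ ε₁ := by
    refine ⟨min (ε₁ / 12) (1 / 2), ε₁ / 12, ε₁ / 12, lt_min (by linarith) (by norm_num),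
      by linarith, by linarith, min_le_right _ _, ?_⟩
    have := min_le_left (ε₁ / 12) (1 / 2)
    linarith
  set ε₀ : ℝ := θ * ρ / 2 with hε₀def
  have hε₀pos : 0 < ε₀ := by positivity
  obtain ⟨K, hKc, hKμ, hKmec⟩ := hmec τ hτpos
  obtain ⟨δ, hδ, hδspec⟩ := hKmec ε₀ hε₀pos
  have hKmeas : MeasurableSet K := hKc.isClosed.measurableSet
  have hKcompl : μ Kᶜ ≤ ENNReal.ofReal τ := by
    have h1 : μ Kᶜ = 1 - μ K := by
      rw [measure_compl hKmeas (measure_ne_top μ K), measure_univ]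
    have h2 : ENNReal.ofReal τ = 1 - ENNReal.ofReal (1 - τ) := by
      rw [← ENNReal.ofReal_one, ← ENNReal.ofReal_sub _ (by linarith : (0:ℝ) ≤ 1 - τ)]
      norm_num
    rw [h1, h2]
    exact tsub_le_tsub_left (le_of_lt hKμ) _
  -- finite subcover of K by δ-balls centered in K
  have hcov : K ⊆ ⋃ x : K, Metric.ball (x : X) δ := fun x hx =>
    Set.mem_iUnion.2 ⟨⟨x, hx⟩, Metric.mem_ball_self hδ⟩
  obtain ⟨tK, htK⟩ := hKc.elim_finite_subcover (fun x : K => Metric.ball (x : X) δ)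
    (fun _ => Metric.isOpen_ball) hcov
  set lst : List X := tK.toList.map Subtype.val with hlst
  set len : ℕ := lst.length with hlen
  set z : Fin len → X := lst.get with hz
  have hzK : ∀ j, z j ∈ K := by
    intro j
    have hmem : z j ∈ lst := List.get_mem lst j
    rw [hlst, List.mem_map] at hmem
    obtain ⟨c, _, hc⟩ := hmem
    rw [← hc]; exact c.2
  have hcov' : ∀ x ∈ K, ∃ j : Fin len, dist x (z j) < δ := by
    intro x hx
    have hx2 := htK hx
    rw [Set.mem_iUnion₂] at hx2
    obtain ⟨i, hi, hxi⟩ := hx2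
    have hmem : (i : X) ∈ lst := by
      rw [hlst, List.mem_map]
      exact ⟨i, (tK.mem_toList).2 hi, rfl⟩
    obtain ⟨j, hj⟩ := List.mem_iff_get.1 hmem
    refine ⟨j, ?_⟩
    simp only [hz]
    rw [hj]
    exact Metric.mem_ball.1 hxi
  -- cells
  set C : Fin len → Set X := fun j =>
    (K ∩ Metric.ball (z j) δ) \ ⋃ (i : Fin len) (_ : i < j), Metric.ball (z i) δ with hC
  have hCmeas : ∀ j, MeasurableSet (C j) := by
    intro j
    refine ((hKmeas.inter Metric.isOpen_ball.measurableSet).diff ?_)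
    exact MeasurableSet.iUnion fun i => MeasurableSet.iUnion
      fun _ => Metric.isOpen_ball.measurableSet
  have hCsubK : ∀ j, C j ⊆ K := fun j x hx => hx.1.1
  have hCball : ∀ j, C j ⊆ Metric.ball (z j) δ := fun j x hx => hx.1.2
  have hCcover : ∀ x ∈ K, ∃ j, x ∈ C j := by
    intro x hx
    have hne : (Finset.univ.filter fun i : Fin len => dist x (z i) < δ).Nonempty := by
      obtain ⟨j, hj⟩ := hcov' x hx
      exact ⟨j, Finset.mem_filter.2 ⟨Finset.mem_univ _, hj⟩⟩
    refine ⟨(Finset.univ.filter fun i : Fin len => dist x (z i) < δ).min' hne, ?_⟩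
    have hjmem := (Finset.univ.filter fun i : Fin len => dist x (z i) < δ).min'_mem hne
    rw [Finset.mem_filter] at hjmem
    refine ⟨⟨hx, Metric.mem_ball.2 hjmem.2⟩, ?_⟩
    intro hmem
    rw [Set.mem_iUnion₂] at hmem
    obtain ⟨i, hij, hxi⟩ := hmem
    have hle : (Finset.univ.filter fun i : Fin len => dist x (z i) < δ).min' hne ≤ i :=
      Finset.min'_le (Finset.univ.filter fun i : Fin len => dist x (z i) < δ) i
        (Finset.mem_filter.2 ⟨Finset.mem_univ _, Metric.mem_ball.1 hxi⟩)
    exact absurd hij (not_lt.2 hle)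
  have hCdisj : ∀ i j x, x ∈ C i → x ∈ C j → i = j := by
    intro i j x hxi hxj
    rcases lt_trichotomy i j with h | h | h
    · have hmem : x ∈ ⋃ (i' : Fin len) (_ : i' < j), Metric.ball (z i') δ :=
        Set.mem_iUnion₂.2 ⟨i, h, hCball i hxi⟩
      exact absurd hmem hxj.2
    · exact h
    · have hmem : x ∈ ⋃ (i' : Fin len) (_ : i' < i), Metric.ball (z i') δ :=
        Set.mem_iUnion₂.2 ⟨j, h, hCball j hxj⟩
      exact absurd hmem hxi.2
  -- the cell-approximation functions
  set H : ℕ → X → ℝ := fun n x => ∑ j : Fin len,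
    (C j).indicator (fun y => dist ((⇑T)^[a n] y) ((⇑T)^[a n] (z j))) x with hH
  have hHval : ∀ n x j, x ∈ C j → H n x = dist ((⇑T)^[a n] x) ((⇑T)^[a n] (z j)) := by
    intro n x j hxj
    simp only [hH]
    rw [Finset.sum_eq_single_of_mem j (Finset.mem_univ j)
      (fun i _ hij => Set.indicator_of_notMem (fun hxi => hij (hCdisj i j x hxi hxj)) _)]
    exact Set.indicator_of_mem hxj _
  have hHzeroOut : ∀ n x, x ∉ K → H n x = 0 := by
    intro n x hx
    simp only [hH]
    exact Finset.sum_eq_zero fun j _ =>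
      Set.indicator_of_notMem (fun hxj => hx (hCsubK j hxj)) _
  have hHnonneg : ∀ n x, 0 ≤ H n x :=
    fun n x => Finset.sum_nonneg fun j _ => Set.indicator_nonneg (fun _ _ => dist_nonneg) _
  have hHle1 : ∀ n x, H n x ≤ 1 := by
    intro n x
    by_cases hx : ∃ j, x ∈ C j
    · obtain ⟨j, hj⟩ := hx
      rw [hHval n x j hj]; exact hdle _ _
    · push_neg at hx
      have hzero : H n x = 0 := by
        simp only [hH]
        exact Finset.sum_eq_zero fun j _ => Set.indicator_of_notMem (hx j) _
      rw [hzero]; norm_num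
  have hHmeas : ∀ n, Measurable (H n) := by
    intro n
    refine Finset.measurable_sum _ fun j _ => Measurable.indicator ?_ (hCmeas j)
    exact (((T.continuous.iterate _).dist continuous_const)).measurable
  have hHint : ∀ n, Integrable (H n) μ := by
    intro n
    refine integrable_of_bound μ (H n) (hHmeas n).aestronglyMeasurable 1 fun x => ?_
    rw [abs_of_nonneg (hHnonneg n x)]; exact hHle1 n x
  set e : ℕ → ℝ := fun n => ∫ x, H n x ∂μ with he
  have he0 : ∀ n, 0 ≤ e n := fun n => integral_nonneg (hHnonneg n)
  -- the averaged functions and reverse Fatou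
  set uR : ℕ → X → ℝ := fun N x => (1 / (N : ℝ)) * ∑ n ∈ Finset.range N, H n x with huR
  have huRnn : ∀ N x, 0 ≤ uR N x := fun N x =>
    mul_nonneg (by positivity) (Finset.sum_nonneg fun n _ => hHnonneg n x)
  have huRle1 : ∀ N x, uR N x ≤ 1 := by
    intro N x
    rcases Nat.eq_zero_or_pos N with h | h
    · simp only [huR, h]; simp
    · have hsum : ∑ n ∈ Finset.range N, H n x ≤ (N : ℝ) := by
        calc ∑ n ∈ Finset.range N, H n x ≤ ∑ n ∈ Finset.range N, 1 :=
            Finset.sum_le_sum fun n _ => hHle1 n x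
          _ = (N : ℝ) := by simp
      simp only [huR]
      rw [one_div, inv_mul_le_iff₀ (by exact_mod_cast h)]
      simpa using hsum
  have huRmeas : ∀ N, Measurable (uR N) := fun N =>
    measurable_const.mul (Finset.measurable_sum _ fun n _ => hHmeas n)
  have huRint : ∀ N, Integrable (uR N) μ := by
    intro N
    refine integrable_of_bound μ (uR N) (huRmeas N).aestronglyMeasurable 1 fun x => ?_
    rw [abs_of_nonneg (huRnn N x)]; exact huRle1 N x
  have hptlim : ∀ x, limsup (fun N => ENNReal.ofReal (uR N x)) atTop ≤ ENNReal.ofReal ε₀ := by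
    intro x
    by_cases hx : x ∈ K
    · obtain ⟨j, hj⟩ := hCcover x hx
      have heq : (fun N : ℕ => uR N x) = fun N : ℕ => (1 / (N : ℝ)) *
          ∑ i ∈ Finset.range N, dist ((⇑T)^[a i] x) ((⇑T)^[a i] (z j)) := by
        funext N
        simp only [huR]
        congr 1
        exact Finset.sum_congr rfl fun n _ => hHval n x j hj
      have hls : limsup (fun N : ℕ => uR N x) atTop < ε₀ := by
        rw [heq]
        exact hδspec x hx (z j) (hzK j) (Metric.mem_ball.1 (hCball j hj))
      have hbdd : IsBoundedUnder (· ≤ ·) atTop (fun N : ℕ => uR N x) :=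
        isBoundedUnder_of ⟨1, fun N => huRle1 N x⟩
      have hev := eventually_lt_of_limsup_lt hls hbdd
      refine limsup_le_of_le (by isBoundedDefault) ?_
      exact hev.mono fun N hN => ENNReal.ofReal_le_ofReal (le_of_lt hN)
    · have heq : (fun N : ℕ => ENNReal.ofReal (uR N x)) = fun _ => (0 : ℝ≥0∞) := by
        funext N
        have h0 : uR N x = 0 := by
          simp only [huR]
          rw [Finset.sum_eq_zero fun n _ => hHzeroOut n x hx, mul_zero]
        rw [h0, ENNReal.ofReal_zero]
      rw [heq, limsup_const]
      exact zero_le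
  have hAvg : limsup (fun N => ENNReal.ofReal (∫ x, uR N x ∂μ)) atTop ≤ ENNReal.ofReal ε₀ := by
    have key := limsup_lintegral_le (μ := μ) (f := fun N x => ENNReal.ofReal (uR N x))
      (fun _ => (1 : ℝ≥0∞)) (fun N => (huRmeas N).ennreal_ofReal)
      (fun N => ae_of_all _ fun x => ENNReal.ofReal_le_one.2 (huRle1 N x))
      (by simp)
    have h2 : ∫⁻ x, limsup (fun N => ENNReal.ofReal (uR N x)) atTop ∂μ ≤ ENNReal.ofReal ε₀ := by
      calc ∫⁻ x, limsup (fun N => ENNReal.ofReal (uR N x)) atTop ∂μ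
          ≤ ∫⁻ _, ENNReal.ofReal ε₀ ∂μ := lintegral_mono fun x => hptlim x
        _ = ENNReal.ofReal ε₀ := by simp
    have h3 : ∀ N, ENNReal.ofReal (∫ x, uR N x ∂μ) = ∫⁻ x, ENNReal.ofReal (uR N x) ∂μ :=
      fun N => ofReal_integral_eq_lintegral_ofReal (huRint N) (ae_of_all _ (huRnn N))
    simp only [h3]
    exact le_trans key h2
  have hev3 : ∀ᶠ N : ℕ in atTop, ∫ x, uR N x ∂μ < θ * ρ := by
    have hlt : limsup (fun N => ENNReal.ofReal (∫ x, uR N x ∂μ)) atTop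
        < ENNReal.ofReal (θ * ρ) := by
      refine lt_of_le_of_lt hAvg ?_
      rw [ENNReal.ofReal_lt_ofReal_iff (by positivity)]
      rw [hε₀def]; linarith [mul_pos hθpos hρ]
    have hev := eventually_lt_of_limsup_lt hlt
    exact hev.mono fun N hN =>
      (ENNReal.ofReal_lt_ofReal_iff_of_nonneg (integral_nonneg (huRnn N))).1 hN
  have hsum : ∀ N : ℕ, ∫ x, uR N x ∂μ = (1 / (N : ℝ)) * ∑ n ∈ Finset.range N, e n := by
    intro N
    simp only [huR]
    rw [integral_const_mul, integral_finset_sum _ fun n _ => hHint n]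
  -- classes
  obtain ⟨W, hWfin, hWcov⟩ := (Metric.totallyBounded_iff.1
    ((isCompact_univ : IsCompact (Set.univ : Set X)).totallyBounded)) γ hγpos
  have hq : ∀ y : X, ∃ w, w ∈ W ∧ dist y w < γ := by
    intro y
    have hy := hWcov (Set.mem_univ y)
    rw [Set.mem_iUnion₂] at hy
    obtain ⟨w, hw, hyw⟩ := hy
    exact ⟨w, hw, Metric.mem_ball.1 hyw⟩
  choose q hqW hqd using hq
  set Wf : Finset X := hWfin.toFinset with hWf
  set cl0 : ℕ → (Fin len → ↥Wf) := fun n j =>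
    ⟨q ((⇑T)^[a n] (z j)), by simp only [hWf, Set.Finite.mem_toFinset]; exact hqW _⟩ with hcl0
  set P : ℕ := Fintype.card (Fin len → ↥Wf) with hP
  set eqv := Fintype.equivFin (Fin len → ↥Wf) with heqv
  set cl : ℕ → Fin P := fun n => eqv (cl0 n) with hcl
  have hclose : ∀ n m, cl n = cl m →
      ∀ j, dist ((⇑T)^[a n] (z j)) ((⇑T)^[a m] (z j)) ≤ 2 * γ := by
    intro n m hnm j
    have h0 : cl0 n = cl0 m := eqv.injective hnm
    have hqe : q ((⇑T)^[a n] (z j)) = q ((⇑T)^[a m] (z j)) := by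
      have h1 := congrFun h0 j
      simp only [hcl0] at h1
      exact Subtype.ext_iff.1 h1
    calc dist ((⇑T)^[a n] (z j)) ((⇑T)^[a m] (z j))
        ≤ dist ((⇑T)^[a n] (z j)) (q ((⇑T)^[a n] (z j))) +
          dist (q ((⇑T)^[a n] (z j))) ((⇑T)^[a m] (z j)) := dist_triangle _ _ _
      _ ≤ γ + γ := by
          refine add_le_add (le_of_lt (hqd _)) ?_
          rw [dist_comm, hqe]
          exact le_of_lt (hqd _)
      _ = 2 * γ := by ring
  -- pair estimate
  refine ⟨P, cl, fun n => e n < θ, ?_, ?_⟩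
  · intro n m hn hm hnm
    have hεn : e n < θ := hn
    have hεm : e m < θ := hm
    set Bad : Set (X × X) := (K ×ˢ K)ᶜ with hBad
    have hBadmeas : MeasurableSet Bad := (hKmeas.prod hKmeas).compl
    set Bf : X × X → ℝ := fun p => 4 * γ + (H n p.1 + H m p.1) + (H n p.2 + H m p.2) +
      Bad.indicator (fun _ => (1 : ℝ)) p with hBf
    have hpb : ∀ p : X × X,
        |dist ((⇑T)^[a n] p.1) ((⇑T)^[a n] p.2) - dist ((⇑T)^[a m] p.1) ((⇑T)^[a m] p.2)|
          ≤ Bf p := by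
      intro p
      by_cases hp : p.1 ∈ K ∧ p.2 ∈ K
      · obtain ⟨i, hi⟩ := hCcover p.1 hp.1
        obtain ⟨j, hj⟩ := hCcover p.2 hp.2
        have hindnn : (0:ℝ) ≤ Bad.indicator (fun _ => (1:ℝ)) p :=
          Set.indicator_nonneg (fun _ _ => by norm_num) _
        have key : |dist ((⇑T)^[a n] p.1) ((⇑T)^[a n] p.2) -
            dist ((⇑T)^[a m] p.1) ((⇑T)^[a m] p.2)| ≤
            (dist ((⇑T)^[a n] p.1) ((⇑T)^[a n] (z i)) +
              dist ((⇑T)^[a n] p.2) ((⇑T)^[a n] (z j))) +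
            (dist ((⇑T)^[a n] (z i)) ((⇑T)^[a m] (z i)) +
              dist ((⇑T)^[a n] (z j)) ((⇑T)^[a m] (z j))) +
            (dist ((⇑T)^[a m] (z i)) ((⇑T)^[a m] p.1) +
              dist ((⇑T)^[a m] (z j)) ((⇑T)^[a m] p.2)) := by
          rw [← Real.dist_eq]
          calc dist (dist ((⇑T)^[a n] p.1) ((⇑T)^[a n] p.2))
                (dist ((⇑T)^[a m] p.1) ((⇑T)^[a m] p.2))
              ≤ dist (dist ((⇑T)^[a n] p.1) ((⇑T)^[a n] p.2))
                  (dist ((⇑T)^[a n] (z i)) ((⇑T)^[a n] (z j))) +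
                dist (dist ((⇑T)^[a n] (z i)) ((⇑T)^[a n] (z j)))
                  (dist ((⇑T)^[a m] (z i)) ((⇑T)^[a m] (z j))) +
                dist (dist ((⇑T)^[a m] (z i)) ((⇑T)^[a m] (z j)))
                  (dist ((⇑T)^[a m] p.1) ((⇑T)^[a m] p.2)) := dist_triangle4 _ _ _ _
            _ ≤ _ := by
                gcongr <;> exact dist_dist_dist_le _ _ _ _
        have h1 := hHval n p.1 i hi
        have h2 := hHval n p.2 j hj
        have h3 := hHval m p.1 i hi
        have h4 := hHval m p.2 j hj
        have h5 := hclose n m hnm i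
        have h6 := hclose n m hnm j
        have h7 : dist ((⇑T)^[a m] (z i)) ((⇑T)^[a m] p.1) = H m p.1 := by
          rw [dist_comm]; exact h3.symm
        have h8 : dist ((⇑T)^[a m] (z j)) ((⇑T)^[a m] p.2) = H m p.2 := by
          rw [dist_comm]; exact h4.symm
        simp only [hBf]
        rw [← h1, ← h2, h7, h8] at key
        linarith
      · have hb1 : |dist ((⇑T)^[a n] p.1) ((⇑T)^[a n] p.2) -
            dist ((⇑T)^[a m] p.1) ((⇑T)^[a m] p.2)| ≤ 1 := by
          rw [abs_sub_le_iff]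
          constructor
          · linarith [hdle ((⇑T)^[a n] p.1) ((⇑T)^[a n] p.2),
              dist_nonneg (x := (⇑T)^[a m] p.1) (y := (⇑T)^[a m] p.2)]
          · linarith [hdle ((⇑T)^[a m] p.1) ((⇑T)^[a m] p.2),
              dist_nonneg (x := (⇑T)^[a n] p.1) (y := (⇑T)^[a n] p.2)]
        have hpBad : p ∈ Bad := by
          simp only [hBad, Set.mem_compl_iff, Set.mem_prod]
          exact hp
        have hind : Bad.indicator (fun _ => (1:ℝ)) p = 1 := Set.indicator_of_mem hpBad _
        simp only [hBf]
        rw [hind]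
        have hn1 := hHnonneg n p.1
        have hn2 := hHnonneg m p.1
        have hn3 := hHnonneg n p.2
        have hn4 := hHnonneg m p.2
        linarith
    -- integrate the bound
    have hintH1a : Integrable (fun p : X × X => H n p.1) (μ.prod μ) := by
      refine integrable_of_bound _ _ ((hHmeas n).comp measurable_fst).aestronglyMeasurable 1
        fun p => ?_
      rw [abs_of_nonneg (hHnonneg n p.1)]; exact hHle1 n p.1
    have hintH1b : Integrable (fun p : X × X => H m p.1) (μ.prod μ) := by
      refine integrable_of_bound _ _ ((hHmeas m).comp measurable_fst).aestronglyMeasurable 1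
        fun p => ?_
      rw [abs_of_nonneg (hHnonneg m p.1)]; exact hHle1 m p.1
    have hintH2a : Integrable (fun p : X × X => H n p.2) (μ.prod μ) := by
      refine integrable_of_bound _ _ ((hHmeas n).comp measurable_snd).aestronglyMeasurable 1
        fun p => ?_
      rw [abs_of_nonneg (hHnonneg n p.2)]; exact hHle1 n p.2
    have hintH2b : Integrable (fun p : X × X => H m p.2) (μ.prod μ) := by
      refine integrable_of_bound _ _ ((hHmeas m).comp measurable_snd).aestronglyMeasurable 1
        fun p => ?_
      rw [abs_of_nonneg (hHnonneg m p.2)]; exact hHle1 m p.2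
    have hintH1 : Integrable (fun p : X × X => H n p.1 + H m p.1) (μ.prod μ) :=
      hintH1a.add hintH1b
    have hintH2 : Integrable (fun p : X × X => H n p.2 + H m p.2) (μ.prod μ) :=
      hintH2a.add hintH2b
    have hintInd : Integrable (Bad.indicator fun _ => (1:ℝ)) (μ.prod μ) :=
      (integrable_const 1).indicator hBadmeas
    have hintBf : Integrable Bf (μ.prod μ) := by
      simp only [hBf]
      exact (((integrable_const (4 * γ)).add hintH1).add hintH2).add hintInd
    have hgd : gd μ T (a n) (a m) ≤ ∫ p, Bf p ∂(μ.prod μ) := by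
      have hdef : gd μ T (a n) (a m) = ∫ p : X × X,
          |dist ((⇑T)^[a n] p.1) ((⇑T)^[a n] p.2) -
            dist ((⇑T)^[a m] p.1) ((⇑T)^[a m] p.2)| ∂(μ.prod μ) := rfl
      rw [hdef]
      exact integral_mono (integrable_gd_integrand hdle _ _) hintBf hpb
    have hfst : ∀ k : ℕ, ∫ p : X × X, H k p.1 ∂(μ.prod μ) = e k := by
      intro k
      rw [MeasureTheory.integral_fun_fst (f := H k)]
      simp [he]
    have hsnd : ∀ k : ℕ, ∫ p : X × X, H k p.2 ∂(μ.prod μ) = e k := by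
      intro k
      rw [MeasureTheory.integral_fun_snd (f := H k)]
      simp [he]
    have hBfint : ∫ p, Bf p ∂(μ.prod μ)
        = 4 * γ + (e n + e m) + (e n + e m) + ((μ.prod μ) Bad).toReal := by
      have iA : Integrable (fun p : X × X => 4 * γ + (H n p.1 + H m p.1)) (μ.prod μ) :=
        (integrable_const _).add hintH1
      have iB : Integrable
          (fun p : X × X => 4 * γ + (H n p.1 + H m p.1) + (H n p.2 + H m p.2)) (μ.prod μ) :=
        iA.add hintH2
      simp only [hBf]
      rw [integral_add iB hintInd, integral_add iA hintH2,
        integral_add (integrable_const (4 * γ)) hintH1,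
        integral_add hintH1a hintH1b, integral_add hintH2a hintH2b]
      rw [hfst n, hfst m, hsnd n, hsnd m]
      rw [integral_indicator_const (1 : ℝ) hBadmeas]
      simp
      rfl
    have hBadeq : Bad = (Kᶜ ×ˢ (Set.univ : Set X)) ∪ ((Set.univ : Set X) ×ˢ Kᶜ) := by
      simp only [hBad]
      exact Set.compl_prod_eq_union K K
    have hBadle : ((μ.prod μ) Bad).toReal ≤ τ + τ := by
      have hle : (μ.prod μ) Bad ≤ ENNReal.ofReal τ + ENNReal.ofReal τ := by
        rw [hBadeq]
        refine le_trans (measure_union_le _ _) ?_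
        rw [Measure.prod_prod, Measure.prod_prod, measure_univ, mul_one, one_mul]
        exact add_le_add hKcompl hKcompl
      calc ((μ.prod μ) Bad).toReal ≤ (ENNReal.ofReal τ + ENNReal.ofReal τ).toReal :=
          ENNReal.toReal_mono (by finiteness) hle
        _ = τ + τ := by
          rw [← ENNReal.ofReal_add (le_of_lt hτpos) (le_of_lt hτpos),
            ENNReal.toReal_ofReal (by linarith)]
    calc gd μ T (a n) (a m) ≤ ∫ p, Bf p ∂(μ.prod μ) := hgd
      _ = 4 * γ + (e n + e m) + (e n + e m) + ((μ.prod μ) Bad).toReal := hBfint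
      _ ≤ 4 * γ + (θ + θ) + (θ + θ) + (τ + τ) := by gcongr
      _ ≤ ε₁ := hsumbound
  · -- density of bad indices
    filter_upwards [hev3, eventually_ge_atTop 1] with N h1 h2
    have hNpos : (0:ℝ) < N := by exact_mod_cast h2
    have hcard : θ * (((Finset.range N).filter fun n => ¬ e n < θ).card : ℝ)
        ≤ ∑ n ∈ Finset.range N, e n := by
      have hsub : ∑ n ∈ (Finset.range N).filter (fun n => ¬ e n < θ), e n
          ≤ ∑ n ∈ Finset.range N, e n :=
        Finset.sum_le_sum_of_subset_of_nonneg (Finset.filter_subset _ _)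
          fun i _ _ => he0 i
      have hconst : ∑ _n ∈ (Finset.range N).filter (fun n => ¬ e n < θ), θ
          = (((Finset.range N).filter fun n => ¬ e n < θ).card : ℝ) * θ := by
        rw [Finset.sum_const, nsmul_eq_mul]
      have hlow : θ * (((Finset.range N).filter fun n => ¬ e n < θ).card : ℝ)
          ≤ ∑ n ∈ (Finset.range N).filter (fun n => ¬ e n < θ), e n := by
        rw [mul_comm θ, ← hconst]
        exact Finset.sum_le_sum fun i hi => not_lt.1 (Finset.mem_filter.1 hi).2
      exact le_trans hlow hsub
    have hEN : ∑ n ∈ Finset.range N, e n < (N : ℝ) * (θ * ρ) := by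
      rw [hsum N, one_div, inv_mul_eq_div] at h1
      have := (div_lt_iff₀ hNpos).1 h1
      linarith
    have hfin : θ * (((Finset.range N).filter fun n => ¬ e n < θ).card : ℝ)
        < θ * (ρ * N) := by
      calc θ * (((Finset.range N).filter fun n => ¬ e n < θ).card : ℝ)
          ≤ ∑ n ∈ Finset.range N, e n := hcard
        _ < (N : ℝ) * (θ * ρ) := hEN
        _ = θ * (ρ * N) := by ring
    exact le_of_lt ((mul_lt_mul_iff_right₀ hθpos).1 hfin)

end Analysis
section Synd

open Classical in
lemma synd (B D : Set ℕ) (β : ℝ) (hβ : 0 < β)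
    (hfreq : ∃ᶠ N in atTop, β * N ≤ (((Finset.range N).filter (· ∈ B)).card : ℝ))
    (hBD : ∀ b ∈ B, ∀ b' ∈ B, b' < b → b - b' ∈ D) :
    ∃ L : ℕ, ∀ t : ℕ, ∃ r ≤ L, ∃ k, t = k + r ∧ (k = 0 ∨ k ∈ D) := by
  by_contra hcon
  push_neg at hcon
  choose t ht using hcon
  -- t L is a "gap start": no decomposition t L = k + r with r ≤ L and k ∈ D ∪ {0}
  have htgt : ∀ L, L < t L := by
    intro L
    by_contra hle
    push_neg at hle
    exact (ht L (t L) hle 0 (by omega)).1 rfl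
  -- greedy sequence with pairwise differences avoiding D
  set u : ℕ → ℕ := fun i => Nat.rec 0 (fun _ ui => t ui) i with hu
  have hu0 : u 0 = 0 := rfl
  have husucc : ∀ i, u (i + 1) = t (u i) := fun i => rfl
  have humono : StrictMono u := by
    apply strictMono_nat_of_lt_succ
    intro i
    rw [husucc]
    exact htgt (u i)
  have hdiff : ∀ i j, j ≤ i → u (i + 1) - u j ∉ D := by
    intro i j hji
    have hle : u j ≤ u i := humono.monotone hji
    have hlt : u i < u (i + 1) := humono (Nat.lt_succ_self i)
    have heq : u (i + 1) = (u (i + 1) - u j) + u j := by omega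
    exact (ht (u i) (u j) hle (u (i + 1) - u j) heq).2
  have hdiff' : ∀ i j, i < j → u j - u i ∉ D := by
    intro i j hij
    obtain ⟨j', rfl⟩ : ∃ j', j = j' + 1 := ⟨j - 1, by omega⟩
    exact hdiff j' i (by omega)
  -- counting constants
  set Q : ℕ := ⌈1 / β⌉₊ + 1 with hQ
  have hQβ : (1 + β) ≤ (Q : ℝ) * β := by
    have h1 : 1 / β ≤ (⌈1 / β⌉₊ : ℝ) := Nat.le_ceil _
    have h2 : ((⌈1 / β⌉₊ : ℕ) : ℝ) + 1 ≤ (Q : ℝ) := by rw [hQ]; push_cast; linarith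
    have h3 : (1 / β + 1) * β ≤ (Q : ℝ) * β := by
      apply mul_le_mul_of_nonneg_right _ (le_of_lt hβ)
      linarith
    calc (1 + β) = (1 / β + 1) * β := by field_simp
      _ ≤ (Q : ℝ) * β := h3
  set U : ℕ := u Q with hU
  obtain ⟨N, hN1, hN2⟩ := (frequently_atTop.1 hfreq) (⌈((U : ℝ) + 1) / β⌉₊)
  have hUβ : (U : ℝ) < β * N := by
    have h1 : ((U : ℝ) + 1) / β ≤ (⌈((U : ℝ) + 1) / β⌉₊ : ℝ) := Nat.le_ceil _
    have h2 : ((⌈((U : ℝ) + 1) / β⌉₊ : ℕ) : ℝ) ≤ (N : ℝ) := by exact_mod_cast hN1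
    have h3 : ((U : ℝ) + 1) / β ≤ (N : ℝ) := le_trans h1 h2
    have h4 : (U : ℝ) + 1 ≤ β * N := by
      rw [div_le_iff₀ hβ] at h3
      linarith [h3]
    linarith
  set Bf : Finset ℕ := (Finset.range N).filter (· ∈ B) with hBfdef
  set F : ℕ → Finset ℕ := fun i => Bf.image (· + u i) with hF
  have hFcard : ∀ i, (F i).card = Bf.card := by
    intro i
    simp only [hF]
    exact Finset.card_image_of_injective _ (add_left_injective (u i))
  have hFsub : ∀ i ∈ Finset.range Q, F i ⊆ Finset.range (N + U) := by
    intro i hi x hx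
    simp only [hF, Finset.mem_image] at hx
    obtain ⟨b, hb, rfl⟩ := hx
    have hb' : b < N := Finset.mem_range.1 (Finset.mem_filter.1 hb).1
    have hui : u i ≤ U := humono.monotone (le_of_lt (Finset.mem_range.1 hi))
    exact Finset.mem_range.2 (by omega)
  have hdisj : ∀ i j, i < j → Disjoint (F i) (F j) := by
    intro i j hij
    rw [Finset.disjoint_left]
    intro x hxi hxj
    simp only [hF, Finset.mem_image] at hxi hxj
    obtain ⟨b, hb, hbe⟩ := hxi
    obtain ⟨b', hb', hbe'⟩ := hxj
    have hbB : b ∈ B := (Finset.mem_filter.1 hb).2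
    have hbB' : b' ∈ B := (Finset.mem_filter.1 hb').2
    have hulij : u i < u j := humono hij
    have hblt : b' < b := by omega
    have hbd : b - b' ∈ D := hBD b hbB b' hbB' hblt
    have : b - b' = u j - u i := by omega
    rw [this] at hbd
    exact hdiff' i j hij hbd
  have hdisj' : ∀ i ∈ (Finset.range Q : Finset ℕ), ∀ j ∈ (Finset.range Q : Finset ℕ),
      i ≠ j → Disjoint (F i) (F j) := by
    intro i _ j _ hij
    rcases lt_or_gt_of_ne hij with h | h
    · exact hdisj i j h
    · exact (hdisj j i h).symm
  have hcount : Q * Bf.card ≤ N + U := by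
    have h1 : ((Finset.range Q).biUnion F).card = ∑ i ∈ Finset.range Q, (F i).card :=
      Finset.card_biUnion hdisj'
    have h2 : (Finset.range Q).biUnion F ⊆ Finset.range (N + U) := by
      intro x hx
      rw [Finset.mem_biUnion] at hx
      obtain ⟨i, hi, hxi⟩ := hx
      exact hFsub i hi hxi
    have h3 : ((Finset.range Q).biUnion F).card ≤ N + U := by
      calc ((Finset.range Q).biUnion F).card ≤ (Finset.range (N + U)).card :=
          Finset.card_le_card h2
        _ = N + U := Finset.card_range _
    have h4 : ∑ i ∈ Finset.range Q, (F i).card = Q * Bf.card := by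
      rw [Finset.sum_congr rfl fun i _ => hFcard i, Finset.sum_const, Finset.card_range,
        smul_eq_mul]
    omega
  -- contradiction
  have hcountR : (Q : ℝ) * Bf.card ≤ (N : ℝ) + U := by exact_mod_cast hcount
  have hQN : (1 + β) * N ≤ (Q : ℝ) * (β * N) := by
    have := mul_le_mul_of_nonneg_right hQβ (Nat.cast_nonneg N : (0:ℝ) ≤ N)
    calc (1 + β) * (N : ℝ) ≤ ((Q : ℝ) * β) * N := this
      _ = (Q : ℝ) * (β * N) := by ring
  have hQB : (Q : ℝ) * (β * N) ≤ (Q : ℝ) * Bf.card :=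
    mul_le_mul_of_nonneg_left hN2 (Nat.cast_nonneg Q)
  nlinarith [hUβ, hcountR, hQN, hQB]

end Synd
open Classical in
theorem stmt15 {X : Type*} [MetricSpace X] [CompactSpace X] [MeasurableSpace X]
    [BorelSpace X] (μ : Measure X) [IsProbabilityMeasure μ] (T : X ≃ₜ X)
    (hT : MeasurePreserving T μ μ)
    (hdle : ∀ x y : X, dist x y ≤ 1)
    (a : ℕ → ℕ) (ha : StrictMono a)
    (hdens : (0 : ℝ) < limsup (fun n : ℕ =>
      (((Finset.range n).filter (fun m => m ∈ Set.range a)).card : ℝ) / n) atTop)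
    (hmec : ∀ τ > (0 : ℝ), ∃ K : Set X, IsCompact K ∧
      μ K > ENNReal.ofReal (1 - τ) ∧ ∀ ε > (0 : ℝ), ∃ δ > (0 : ℝ),
      ∀ x ∈ K, ∀ y ∈ K, dist x y < δ →
        limsup (fun n : ℕ => (1 / (n : ℝ)) *
          ∑ i ∈ Finset.range n, dist ((⇑T)^[a i] x) ((⇑T)^[a i] y)) atTop < ε) :
    ∀ ε > (0 : ℝ), ∃ F : Finset ℕ, ∀ n : ℕ, ∃ m ∈ F,
      eLpNorm (fun p : X × X =>
          dist ((⇑T)^[a n] p.1) ((⇑T)^[a n] p.2)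
            - dist ((⇑T)^[a m] p.1) ((⇑T)^[a m] p.2)) 1 (μ.prod μ)
        < ENNReal.ofReal ε := by
  intro ε hε
  set ε₁ : ℝ := ε / 3 with hε₁def
  have hε₁ : 0 < ε₁ := by positivity
  set dens : ℕ → ℝ := fun n =>
    (((Finset.range n).filter (fun m => m ∈ Set.range a)).card : ℝ) / n with hdensdef
  set c : ℝ := limsup dens atTop with hcdef
  have hc : 0 < c := hdens
  have hρ : 0 < c / 4 := by positivity
  obtain ⟨P, cl, good, hpair, hbad⟩ := analysis hT hdle a hmec ε₁ (c / 4) hε₁ hρ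
  have hP : 0 < P := (cl 0).pos
  set β : ℝ := c / (4 * P) with hβdef
  have hβ : 0 < β := by positivity
  -- frequently many N with many elements of A below N
  have hAfreq : ∃ᶠ N : ℕ in atTop, (c / 2) * N ≤
      (((Finset.range N).filter (fun m => m ∈ Set.range a)).card : ℝ) := by
    have hbdd : IsBoundedUnder (· ≥ ·) atTop dens :=
      isBoundedUnder_of ⟨0, fun N => by positivity⟩
    have hfr : ∃ᶠ N : ℕ in atTop, c / 2 < dens N :=
      frequently_lt_of_lt_limsup hbdd.isCoboundedUnder_le (by linarith)
    refine hfr.mono fun N hN => ?_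
    have hN0 : N ≠ 0 := by
      rintro rfl
      simp only [hdensdef] at hN
      norm_num at hN
      linarith
    have hNpos : (0 : ℝ) < N := by
      have := Nat.pos_of_ne_zero hN0
      exact_mod_cast this
    have hdN : c / 2 <
        (((Finset.range N).filter (fun m => m ∈ Set.range a)).card : ℝ) / N := hN
    have := (lt_div_iff₀ hNpos).1 hdN
    linarith
  -- frequently many N with many good times below N
  have hgoodfreq : ∃ᶠ N : ℕ in atTop, (c / 4) * N ≤
      (((Finset.range N).filter (fun t => ∃ n, good n ∧ a n = t)).card : ℝ) := by
    refine (hAfreq.and_eventually hbad).mono ?_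
    rintro N ⟨h1, h2⟩
    have hsubset : (Finset.range N).filter (fun m => m ∈ Set.range a) ⊆
        ((Finset.range N).filter (fun t => ∃ n, good n ∧ a n = t)) ∪
          ((Finset.range N).filter (fun n => ¬ good n)).image a := by
      intro t ht
      rw [Finset.mem_filter] at ht
      obtain ⟨htN, n, hn⟩ := ht
      by_cases hg : good n
      · exact Finset.mem_union_left _ (Finset.mem_filter.2 ⟨htN, n, hg, hn⟩)
      · refine Finset.mem_union_right _ (Finset.mem_image.2
          ⟨n, Finset.mem_filter.2 ⟨?_, hg⟩, hn⟩)
        have hna : n ≤ a n := ha.le_apply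
        have htN' : t < N := Finset.mem_range.1 htN
        exact Finset.mem_range.2 (by omega)
    have hcard : (((Finset.range N).filter (fun m => m ∈ Set.range a)).card : ℝ) ≤
        (((Finset.range N).filter (fun t => ∃ n, good n ∧ a n = t)).card : ℝ) +
          (((Finset.range N).filter (fun n => ¬ good n)).card : ℝ) := by
      have h3 := Finset.card_le_card hsubset
      have h4 := Finset.card_union_le
        ((Finset.range N).filter (fun t => ∃ n, good n ∧ a n = t))
        (((Finset.range N).filter (fun n => ¬ good n)).image a)
      have h5 := Finset.card_image_le (s := (Finset.range N).filter (fun n => ¬ good n))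
        (f := a)
      have h6 : ((Finset.range N).filter (fun m => m ∈ Set.range a)).card ≤
          ((Finset.range N).filter (fun t => ∃ n, good n ∧ a n = t)).card +
            ((Finset.range N).filter (fun n => ¬ good n)).card := by omega
      exact_mod_cast h6
    linarith
  -- choose a class with frequently positive density of good times
  set Btimes : Fin P → Set ℕ := fun κ => {t : ℕ | ∃ n, good n ∧ cl n = κ ∧ a n = t}
    with hBtimes
  have hκ : ∃ κ : Fin P, ∃ᶠ N : ℕ in atTop,
      β * N ≤ (((Finset.range N).filter (· ∈ Btimes κ)).card : ℝ) := by
    by_contra hcon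
    push_neg at hcon
    have hcon' : ∀ κ : Fin P, ∀ᶠ N : ℕ in atTop,
        (((Finset.range N).filter (· ∈ Btimes κ)).card : ℝ) < β * N := by
      intro κ
      have := (hcon κ)
      refine this.mono fun N hN => ?_
      exact hN
    have hall : ∀ᶠ N : ℕ in atTop, ∀ κ : Fin P,
        (((Finset.range N).filter (· ∈ Btimes κ)).card : ℝ) < β * N :=
      eventually_all.2 hcon'
    obtain ⟨N, hg, hall'⟩ := (hgoodfreq.and_eventually hall).exists
    have hsub : (Finset.range N).filter (fun t => ∃ n, good n ∧ a n = t) ⊆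
        Finset.univ.biUnion (fun κ : Fin P =>
          (Finset.range N).filter (· ∈ Btimes κ)) := by
      intro t ht
      rw [Finset.mem_filter] at ht
      obtain ⟨htN, n, hgn, hn⟩ := ht
      refine Finset.mem_biUnion.2 ⟨cl n, Finset.mem_univ _, Finset.mem_filter.2 ⟨htN, ?_⟩⟩
      exact ⟨n, hgn, rfl, hn⟩
    have hcard : (((Finset.range N).filter (fun t => ∃ n, good n ∧ a n = t)).card : ℝ) ≤
        ∑ κ : Fin P, (((Finset.range N).filter (· ∈ Btimes κ)).card : ℝ) := by
      have h1 := Finset.card_le_card hsub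
      have h2 := Finset.card_biUnion_le (s := (Finset.univ : Finset (Fin P)))
        (t := fun κ : Fin P => (Finset.range N).filter (· ∈ Btimes κ))
      have h3 : ((Finset.range N).filter (fun t => ∃ n, good n ∧ a n = t)).card ≤
          ∑ κ : Fin P, ((Finset.range N).filter (· ∈ Btimes κ)).card := le_trans h1 h2
      exact_mod_cast h3
    have hne : (Finset.univ : Finset (Fin P)).Nonempty := ⟨⟨0, hP⟩, Finset.mem_univ _⟩
    have hlt : ∑ κ : Fin P, (((Finset.range N).filter (· ∈ Btimes κ)).card : ℝ) <
        ∑ _κ : Fin P, β * N :=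
      Finset.sum_lt_sum_of_nonempty hne fun κ _ => hall' κ
    have hPβ : ∑ _κ : Fin P, β * (N : ℝ) = (c / 4) * N := by
      rw [Finset.sum_const, Finset.card_univ, Fintype.card_fin, nsmul_eq_mul, hβdef]
      have hPne : (P : ℝ) ≠ 0 := by positivity
      field_simp
    rw [hPβ] at hlt
    linarith
  obtain ⟨κ, hκfreq⟩ := hκ
  -- the set of return times with small gd
  set D : Set ℕ := {k : ℕ | gd μ T k 0 ≤ ε₁} with hD
  have hBD : ∀ b ∈ Btimes κ, ∀ b' ∈ Btimes κ, b' < b → b - b' ∈ D := by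
    rintro b ⟨n, hgn, hcn, rfl⟩ b' ⟨m, hgm, hcm, rfl⟩ hlt
    have hpair' : gd μ T (a n) (a m) ≤ ε₁ := hpair n m hgn hgm (hcn.trans hcm.symm)
    have hshift : gd μ T (a n - a m + a m) (0 + a m) = gd μ T (a n - a m) 0 :=
      gd_shift hT _ _ _
    rw [Nat.sub_add_cancel (le_of_lt hlt), zero_add] at hshift
    show gd μ T (a n - a m) 0 ≤ ε₁
    rw [← hshift]
    exact hpair'
  obtain ⟨L, hL⟩ := synd (Btimes κ) D β hβ hκfreq hBD
  -- every a n is gd-close to some r ≤ L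
  have hrch : ∀ n : ℕ, ∃ r, r ≤ L ∧ gd μ T (a n) r ≤ ε₁ := by
    intro n
    obtain ⟨r, hrL, k, hk, hkD⟩ := hL (a n)
    refine ⟨r, hrL, ?_⟩
    rcases hkD with rfl | hkD
    · rw [zero_add] at hk
      rw [hk, gd_self]
      exact le_of_lt hε₁
    · have hshift : gd μ T (k + r) (0 + r) = gd μ T k 0 := gd_shift hT _ _ _
      rw [zero_add] at hshift
      rw [hk, hshift]
      exact hkD
  choose rch hrchL hrchgd using hrch
  set rep : ℕ → ℕ := fun r => if h : ∃ m, rch m = r then h.choose else 0 with hrep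
  refine ⟨(Finset.range (L + 1)).image rep, ?_⟩
  intro n
  have hex : ∃ m, rch m = rch n := ⟨n, rfl⟩
  set m : ℕ := rep (rch n) with hm
  have hmeq : rch m = rch n := by
    simp only [hm, hrep, dif_pos hex]
    exact hex.choose_spec
  refine ⟨m, Finset.mem_image.2 ⟨rch n, Finset.mem_range.2 (by
    have := hrchL n; omega), hm.symm⟩, ?_⟩
  have hgdnm : gd μ T (a n) (a m) ≤ 2 * ε₁ := by
    calc gd μ T (a n) (a m) ≤ gd μ T (a n) (rch n) + gd μ T (rch n) (a m) :=
        gd_triangle hdle _ _ _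
      _ ≤ ε₁ + ε₁ := by
          refine add_le_add (hrchgd n) ?_
          rw [gd_symm, ← hmeq]
          exact hrchgd m
      _ = 2 * ε₁ := by ring
  have hconv : eLpNorm (fun p : X × X =>
      dist ((⇑T)^[a n] p.1) ((⇑T)^[a n] p.2)
        - dist ((⇑T)^[a m] p.1) ((⇑T)^[a m] p.2)) 1 (μ.prod μ)
      = ENNReal.ofReal (gd μ T (a n) (a m)) := by
    rw [eLpNorm_one_eq_lintegral_enorm]
    have hint : Integrable (fun p : X × X =>
        dist ((⇑T)^[a n] p.1) ((⇑T)^[a n] p.2)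
          - dist ((⇑T)^[a m] p.1) ((⇑T)^[a m] p.2)) (μ.prod μ) := by
      refine integrable_of_bound _ _
        (((continuous_distIter (a n)).sub (continuous_distIter (a m))).aestronglyMeasurable)
        2 fun p => ?_
      have h1 := dist_nonneg (x := (⇑T)^[a n] p.1) (y := (⇑T)^[a n] p.2)
      have h2 := dist_nonneg (x := (⇑T)^[a m] p.1) (y := (⇑T)^[a m] p.2)
      have h3 := hdle ((⇑T)^[a n] p.1) ((⇑T)^[a n] p.2)
      have h4 := hdle ((⇑T)^[a m] p.1) ((⇑T)^[a m] p.2)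
      rw [abs_sub_le_iff]
      constructor <;> linarith
    rw [← ofReal_integral_norm_eq_lintegral_enorm hint]
    congr 1
  rw [hconv]
  have hlt : gd μ T (a n) (a m) < ε := by
    have : 2 * ε₁ < ε := by rw [hε₁def]; linarith
    linarith
  exact (ENNReal.ofReal_lt_ofReal_iff hε).2 hlt
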